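/- Let b ∈ ℂ with b ≠ 0 and |b| ≠ 1, and a ∈ ℂ with |a| = 1. Then a² + b/conj(b) + 2a(b + 1/conj(b)) ≠ 0. -/

import Mathlib

open Complex ComplexConjugate

theorem no_double_unimodular_with_offcircle_pair (a b : ℂ)
    (hb0 : b ≠ 0) (hb1 : ‖b‖ ≠ 1) (ha : ‖a‖ = 1) :
    a ^ 2 + b / conj b + 2 * a * (b + 1 / conj b) ≠ 0 := by
  intro h
  have hb' : conj b ≠ 0 := by simpa using hb0
  have hr : 0 < ‖b‖ := norm_pos_iff.mpr hb0
  set r := ‖b‖ with hrdef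
  have hmc : b * conj b = ((r : ℂ))^2 := by
    rw [mul_conj, Complex.normSq_eq_norm_sq]
    push_cast
    rfl
  have h2 : b + 1 / conj b = b * ((1 + (r:ℂ)^2) / (r:ℂ)^2) := by
    have hrne : (r:ℂ) ≠ 0 := by exact_mod_cast hr.ne'
    field_simp
    linear_combination -hmc
  have habs2 : ‖b + 1 / conj b‖ = r * ((1 + r^2) / r^2) := by
    rw [h2, norm_mul, norm_div,
      show (1 + (r:ℂ)^2) = ((1 + r^2 : ℝ) : ℂ) by push_cast; ring,
      show ((r:ℂ)^2) = ((r^2 : ℝ) : ℂ) by push_cast; ring,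
      Complex.norm_real, Real.norm_eq_abs, Complex.norm_real, Real.norm_eq_abs,
      abs_of_pos (by positivity : (0:ℝ) < 1 + r^2),
      abs_of_pos (by positivity : (0:ℝ) < r^2)]
  have heq : a ^ 2 + b / conj b = -(2 * a * (b + 1 / conj b)) := by
    linear_combination h
  have hle : ‖a ^ 2 + b / conj b‖ ≤ 2 := by
    calc ‖a ^ 2 + b / conj b‖
        ≤ ‖a ^ 2‖ + ‖b / conj b‖ := norm_add_le _ _
      _ = 2 := by
          rw [norm_pow, ha, norm_div, Complex.norm_conj]
          field_simp
          norm_num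
  have hgt : ‖a ^ 2 + b / conj b‖ = 2 * (r * ((1 + r^2) / r^2)) := by
    rw [heq, norm_neg, norm_mul, norm_mul, ha, habs2]
    norm_num
  rw [hgt] at hle
  have hne : r - 1 ≠ 0 := sub_ne_zero.mpr hb1
  have hsq : 0 < (r - 1)^2 := (sq_nonneg _).lt_of_ne (Ne.symm (pow_ne_zero 2 hne))
  have h5 : r * ((1 + r^2) / r^2) = (1 + r^2) / r := by field_simp
  have h4 : 2 < r * ((1 + r^2) / r^2) := by
    rw [h5, lt_div_iff₀ hr]
    nlinarith
  linarith
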